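/- Let L be a number field of degree [L : ℚ], and let x, y ∈ ℙⁿ(L) be two distinct points with homogeneous coordinates x_0, …, x_n and y_0, …, y_n lying in the ring of integers 𝒪_L. Let 𝔓_1, …, 𝔓_r be distinct nonzero prime ideals of 𝒪_L such that for each k: (i) some coordinate x_i does not lie in 𝔓_k, (ii) some coordinate y_j does not lie in 𝔓_k, and (iii) x_i y_j − x_j y_i ∈ 𝔓_k for all i, j (i.e., x and y have the same reduction modulo 𝔓_k). Then h(x) + h(y) ≥ (1/[L : ℚ]) · ∑_{k=1}^r log N_{L/ℚ}(𝔓_k) − log 2. -/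

import Mathlib

open NumberField IsDedekindDomain
open scoped Classical

/-- The set of places of a number field `K`: infinite (archimedean) places together with
finite places (nonzero prime ideals of the ring of integers). -/
abbrev NumberField.Place (K : Type*) [Field K] [NumberField K] : Type _ :=
  InfinitePlace K ⊕ HeightOneSpectrum (𝓞 K)

variable (K : Type*) [Field K] [NumberField K]

/-- The residue characteristic of a finite place. -/
noncomputable def NumberField.resChar (v : HeightOneSpectrum (𝓞 K)) : ℕ :=
  ringChar (𝓞 K ⧸ v.asIdeal)

/-- The ramification index of a finite place over its residue characteristic. -/
noncomputable def NumberField.eIdx (v : HeightOneSpectrum (𝓞 K)) : ℕ :=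
  Ideal.ramificationIdx'
    (Ideal.span {(NumberField.resChar K v : ℤ)}) v.asIdeal

/-- The residue degree of a finite place over its residue characteristic,
computed as the exponent of `p` in the absolute norm of the prime. -/
noncomputable def NumberField.fIdx (v : HeightOneSpectrum (𝓞 K)) : ℕ :=
  (Ideal.absNorm v.asIdeal).factorization (NumberField.resChar K v)

/-- The order of vanishing of `x ∈ K` at a finite place. -/
noncomputable def NumberField.ordAt (v : HeightOneSpectrum (𝓞 K)) (x : K) : ℤ :=
  if hx : x = 0 then 0
  else -Multiplicative.toAdd (WithZero.unzero (((v.valuation K).ne_zero_iff).mpr hx))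

/-- The absolute value attached to a finite place `v` with residue characteristic `p`,
normalized so that it extends the standard (`p`-adic) absolute value on `ℚ`:
`|x|_v = p ^ (-(ord_v x) / e(v/p))`. -/
noncomputable def NumberField.finAbs (v : HeightOneSpectrum (𝓞 K)) (x : K) : ℝ :=
  if x = 0 then 0
  else (NumberField.resChar K v : ℝ) ^
    (-(NumberField.ordAt K v x : ℝ) / (NumberField.eIdx K v : ℝ))

/-- The normalized absolute value `|·|_v` attached to a place `v` of `K`; it extends the
standard absolute value on the completion `ℚ_v` of `ℚ`. -/
noncomputable def NumberField.placeAbs : NumberField.Place K → K → ℝ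
  | Sum.inl w => fun x => w x
  | Sum.inr v => fun x => NumberField.finAbs K v x

/-- The local degree `[K_v : ℚ_v]` of a place `v` of `K`. -/
noncomputable def NumberField.localDeg : NumberField.Place K → ℕ
  | Sum.inl w => w.mult
  | Sum.inr v => NumberField.eIdx K v * NumberField.fIdx K v

/-- The normalized local degree `n_v = [K_v : ℚ_v] / [K : ℚ]`. -/
noncomputable def NumberField.nv (v : NumberField.Place K) : ℝ :=
  (NumberField.localDeg K v : ℝ) / (Module.finrank ℚ K : ℝ)

/-- `max_k |x_k|_v` for a tuple of projective coordinates. -/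
noncomputable def NumberField.supAbs (v : NumberField.Place K) {n : ℕ}
    (x : Fin (n + 1) → K) : ℝ :=
  Finset.univ.sup' Finset.univ_nonempty fun i => NumberField.placeAbs K v (x i)

/-- The absolute logarithmic Weil height of a point of `ℙⁿ(K)` given by projective
coordinates `x = [x_0 : ⋯ : x_n]`:  `h(x) = ∑_v n_v log max_k |x_k|_v`. -/
noncomputable def NumberField.heightProj {n : ℕ} (x : Fin (n + 1) → K) : ℝ :=
  ∑ᶠ v : NumberField.Place K, NumberField.nv K v * Real.log (NumberField.supAbs K v x)

/-- The logarithmic `v`-adic distance between two points of `ℙⁿ(K)`: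
`δ_v(x,y) = -log ( max_{i,j} |x_i y_j - x_j y_i|_v / (max_k |x_k|_v ⬝ max_k |y_k|_v) )`. -/
noncomputable def NumberField.deltaAt (v : NumberField.Place K) {n : ℕ}
    (x y : Fin (n + 1) → K) : ℝ :=
  -Real.log
    ((Finset.univ.sup' Finset.univ_nonempty fun p : Fin (n + 1) × Fin (n + 1) =>
        NumberField.placeAbs K v (x p.1 * y p.2 - x p.2 * y p.1)) /
      (NumberField.supAbs K v x * NumberField.supAbs K v y))


section Aux

variable {L : Type*} [Field L] [NumberField L]

open NumberField Ideal

/-- count of a height-one prime in the factorization of an ideal -/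
noncomputable def cntI (v : HeightOneSpectrum (𝓞 L)) (I : Ideal (𝓞 L)) : ℕ :=
  (Associates.mk v.asIdeal).count (Associates.mk I).factors

lemma le_cntI_iff {v : HeightOneSpectrum (𝓞 L)} {I : Ideal (𝓞 L)} (hI : I ≠ 0) (m : ℕ) :
    m ≤ cntI v I ↔ I ≤ v.asIdeal ^ m := by
  rw [cntI, ← Associates.prime_pow_dvd_iff_le (Associates.mk_ne_zero.mpr hI)
    v.associates_irreducible, ← Associates.mk_pow, Associates.mk_le_mk_iff_dvd, Ideal.dvd_iff_le]

lemma mem_pow_iff_le_cnt {v : HeightOneSpectrum (𝓞 L)} {a : 𝓞 L} (ha : a ≠ 0) (m : ℕ) :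
    a ∈ v.asIdeal ^ m ↔ m ≤ cntI v (Ideal.span {a}) := by
  rw [le_cntI_iff (by simpa using ha), Ideal.span_singleton_le_iff_mem]

lemma cntI_ne_zero_iff {v : HeightOneSpectrum (𝓞 L)} {I : Ideal (𝓞 L)} (hI : I ≠ 0) :
    cntI v I ≠ 0 ↔ v.asIdeal ∣ I := by
  rw [Ideal.dvd_iff_le, ← pow_one v.asIdeal, ← le_cntI_iff hI]
  omega

end Aux

set_option synthInstance.maxHeartbeats 1000000
section Aux2

variable {L : Type*} [Field L] [NumberField L]

open NumberField Ideal

lemma quot_finite (v : HeightOneSpectrum (𝓞 L)) : Finite (𝓞 L ⧸ v.asIdeal) :=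
  (Ideal.absNorm_ne_zero_iff v.asIdeal).mp
    (by simp [Ideal.absNorm_eq_zero_iff, v.ne_bot])

lemma resChar_spec (v : HeightOneSpectrum (𝓞 L)) :
    (resChar L v).Prime ∧ Ideal.absNorm v.asIdeal = resChar L v ^ fIdx L v ∧ fIdx L v ≠ 0 := by
  have : Finite (𝓞 L ⧸ v.asIdeal) := quot_finite v
  letI : Field (𝓞 L ⧸ v.asIdeal) := Ideal.Quotient.field v.asIdeal
  letI := Fintype.ofFinite (𝓞 L ⧸ v.asIdeal)
  obtain ⟨m, hp, hcard⟩ := FiniteField.card (𝓞 L ⧸ v.asIdeal) (ringChar (𝓞 L ⧸ v.asIdeal))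
  have hN : Ideal.absNorm v.asIdeal = resChar L v ^ (m : ℕ) := by
    rw [Ideal.absNorm_apply, Submodule.cardQuot_apply, Nat.card_eq_fintype_card, hcard]; rfl
  have hf : fIdx L v = (m : ℕ) := by
    rw [fIdx, hN, resChar, hp.factorization_pow, Finsupp.single_eq_same]
  exact ⟨hp, by rw [hf]; exact hN, by rw [hf]; exact_mod_cast m.ne_zero⟩

lemma resChar_mem (v : HeightOneSpectrum (𝓞 L)) : ((resChar L v : ℕ) : 𝓞 L) ∈ v.asIdeal := by
  have : Finite (𝓞 L ⧸ v.asIdeal) := quot_finite v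
  haveI : CharP (𝓞 L ⧸ v.asIdeal) (resChar L v) := ringChar.charP _
  have h := CharP.cast_eq_zero (𝓞 L ⧸ v.asIdeal) (resChar L v)
  rwa [← map_natCast (Ideal.Quotient.mk v.asIdeal), Ideal.Quotient.eq_zero_iff_mem] at h

lemma eIdx_ne_zero (v : HeightOneSpectrum (𝓞 L)) : eIdx L v ≠ 0 := by
  have hp := (resChar_spec v).1
  refine IsDedekindDomain.ramificationIdx'_ne_zero (p := Ideal.span {((resChar L v : ℕ) : ℤ)}) ?_ v.isPrime ?_
  · rw [Ideal.map_span]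
    simp only [Set.image_singleton, map_intCast]
    rw [Ne, Ideal.span_singleton_eq_bot]
    push_cast
    exact_mod_cast Nat.cast_ne_zero.mpr hp.ne_zero
  · rw [Ideal.map_span]
    simp only [Set.image_singleton, map_intCast]
    rw [Ideal.span_singleton_le_iff_mem]
    push_cast
    exact_mod_cast resChar_mem v

end Aux2

section Aux3

variable {L : Type*} [Field L] [NumberField L]

open NumberField Ideal IsDedekindDomain.HeightOneSpectrum

lemma coeL_ne_zero {a : 𝓞 L} (ha : a ≠ 0) : (algebraMap (𝓞 L) L a) ≠ 0 := by
  simpa using ha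

lemma ordAt_eq_cnt (v : HeightOneSpectrum (𝓞 L)) {a : 𝓞 L} (ha : a ≠ 0) :
    ordAt L v (algebraMap (𝓞 L) L a) = (cntI v (Ideal.span {a}) : ℤ) := by
  rw [ordAt, dif_neg (coeL_ne_zero ha)]
  have hval : v.valuation L (algebraMap (𝓞 L) L a)
      = ((Multiplicative.ofAdd (-(cntI v (Ideal.span {a}) : ℤ)) : Multiplicative ℤ) : WithZero (Multiplicative ℤ)) := by
    rw [valuation_of_algebraMap, intValuation_apply, v.intValuationDef_if_neg ha]
    rfl
  have h2 : (WithZero.unzero (((v.valuation L).ne_zero_iff).mpr (coeL_ne_zero ha)))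
      = Multiplicative.ofAdd (-(cntI v (Ideal.span {a}) : ℤ)) :=
    WithZero.coe_inj.mp
      ((WithZero.coe_unzero (((v.valuation L).ne_zero_iff).mpr (coeL_ne_zero ha))).trans hval)
  rw [h2]
  simp

/-- The per-place term at a finite place, for general natural "order" `c`:
`n_v * log (p ^ (-(c : ℝ) / e)) = -(c/d) * log N(v)`. -/
lemma nv_mul_log_rpow (v : HeightOneSpectrum (𝓞 L)) (c : ℕ) :
    nv L (Sum.inr v) * Real.log ((resChar L v : ℝ) ^ (-(c : ℝ) / (eIdx L v : ℝ)))
      = -((c : ℝ) / (Module.finrank ℚ L : ℝ)) * Real.log (Ideal.absNorm v.asIdeal) := by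
  obtain ⟨hp, hN, hf⟩ := resChar_spec v
  have he : (eIdx L v : ℝ) ≠ 0 := Nat.cast_ne_zero.mpr (eIdx_ne_zero v)
  have hd : (Module.finrank ℚ L : ℝ) ≠ 0 :=
    Nat.cast_ne_zero.mpr Module.finrank_pos.ne'
  have hppos : (0 : ℝ) < (resChar L v : ℝ) := by exact_mod_cast hp.pos
  rw [Real.log_rpow hppos, hN]
  push_cast
  rw [Real.log_pow]
  rw [nv, localDeg]
  push_cast
  field_simp

end Aux3

section Aux4

variable {L : Type*} [Field L] [NumberField L]

open NumberField Ideal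

lemma finAbs_eq {v : HeightOneSpectrum (𝓞 L)} {a : 𝓞 L} (ha : a ≠ 0) :
    finAbs L v (algebraMap (𝓞 L) L a)
      = (resChar L v : ℝ) ^ (-((cntI v (Ideal.span {a})) : ℝ) / (eIdx L v : ℝ)) := by
  rw [finAbs, if_neg (coeL_ne_zero ha), ordAt_eq_cnt v ha]
  norm_num

variable {m : ℕ}

/-- content ideal of a tuple -/
noncomputable def contI (x : Fin (m + 1) → 𝓞 L) : Ideal (𝓞 L) :=
  Ideal.span (Set.range x)

lemma contI_ne_zero {x : Fin (m + 1) → 𝓞 L} (hx : ∃ i, x i ≠ 0) : contI x ≠ 0 := by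
  obtain ⟨i, hi⟩ := hx
  intro h
  apply hi
  have : x i ∈ contI x := Ideal.subset_span ⟨i, rfl⟩
  rw [h] at this
  simpa using this

/-- the minimal order of the coordinates equals the count of the content ideal -/
lemma cnt_contI_le {v : HeightOneSpectrum (𝓞 L)} {x : Fin (m + 1) → 𝓞 L}
    (hx : ∃ i, x i ≠ 0) {i : Fin (m + 1)} (hi : x i ≠ 0) :
    cntI v (contI x) ≤ cntI v (Ideal.span {x i}) := by
  rw [← mem_pow_iff_le_cnt hi]
  have h := (le_cntI_iff (contI_ne_zero hx) (cntI v (contI x))).mp le_rfl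
  exact h (Ideal.subset_span ⟨i, rfl⟩)

lemma exists_cnt_eq {v : HeightOneSpectrum (𝓞 L)} {x : Fin (m + 1) → 𝓞 L}
    (hx : ∃ i, x i ≠ 0) :
    ∃ i, x i ≠ 0 ∧ cntI v (Ideal.span {x i}) = cntI v (contI x) := by
  by_contra hcon
  push_neg at hcon
  have : contI x ≤ v.asIdeal ^ (cntI v (contI x) + 1) := by
    rw [contI, Ideal.span_le]
    rintro _ ⟨i, rfl⟩
    simp only [SetLike.mem_coe]
    by_cases hi : x i = 0
    · rw [hi]; exact zero_mem _
    · rw [mem_pow_iff_le_cnt hi]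
      have h1 := cnt_contI_le (v := v) hx hi
      have h2 := hcon i hi
      have hcc : cntI v (Ideal.span (Set.range x)) = cntI v (contI x) := rfl
      omega
  have := (le_cntI_iff (contI_ne_zero hx) _).mpr this
  omega

lemma mem_pow_contI {v : HeightOneSpectrum (𝓞 L)} (x : Fin (m + 1) → 𝓞 L) (i : Fin (m + 1)) :
    x i ∈ v.asIdeal ^ (cntI v (contI x)) := by
  by_cases hx : ∃ j, x j ≠ 0
  · exact (le_cntI_iff (contI_ne_zero hx) _).mp le_rfl (Ideal.subset_span ⟨i, rfl⟩)
  · push_neg at hx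
    rw [hx i]; exact zero_mem _

/-- the sup of the coordinate absolute values at a finite place -/
lemma supAbs_fin {v : HeightOneSpectrum (𝓞 L)} {x : Fin (m + 1) → 𝓞 L}
    (hx : ∃ i, x i ≠ 0) :
    supAbs L (Sum.inr v) (fun i => algebraMap (𝓞 L) L (x i))
      = (resChar L v : ℝ) ^ (-((cntI v (contI x)) : ℝ) / (eIdx L v : ℝ)) := by
  obtain ⟨hp, -, -⟩ := resChar_spec (L := L) v
  have hp1 : (1 : ℝ) < (resChar L v : ℝ) := by exact_mod_cast hp.one_lt
  have he : (0 : ℝ) < (eIdx L v : ℝ) :=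
    Nat.cast_pos.mpr (Nat.pos_of_ne_zero (eIdx_ne_zero v))
  apply le_antisymm
  · apply Finset.sup'_le
    intro i _
    show placeAbs L (Sum.inr v) _ ≤ _
    by_cases hi : x i = 0
    · show finAbs L v (algebraMap (𝓞 L) L (x i)) ≤ _
      rw [hi]
      simp only [map_zero, finAbs, if_pos rfl]
      positivity
    · show finAbs L v (algebraMap (𝓞 L) L (x i)) ≤ _
      rw [finAbs_eq hi]
      rw [Real.rpow_le_rpow_left_iff hp1]
      have h0 := cnt_contI_le (v := v) hx hi
      rw [div_le_div_iff_of_pos_right he]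
      have h' : ((cntI v (contI x)) : ℝ) ≤ ((cntI v (Ideal.span {x i})) : ℝ) := by
        exact_mod_cast h0
      linarith
  · obtain ⟨i, hi, hcnt⟩ := exists_cnt_eq (v := v) hx
    have : placeAbs L (Sum.inr v) (algebraMap (𝓞 L) L (x i))
        = (resChar L v : ℝ) ^ (-((cntI v (contI x)) : ℝ) / (eIdx L v : ℝ)) := by
      show finAbs L v _ = _
      rw [finAbs_eq hi, hcnt]
    rw [← this]
    exact Finset.le_sup'
      (fun j => placeAbs L (Sum.inr v) (algebraMap (𝓞 L) L (x j))) (Finset.mem_univ i)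

/-- per-place value of the height summand at a finite place -/
lemma nv_log_supAbs_fin {v : HeightOneSpectrum (𝓞 L)} {x : Fin (m + 1) → 𝓞 L}
    (hx : ∃ i, x i ≠ 0) :
    nv L (Sum.inr v) * Real.log (supAbs L (Sum.inr v) (fun i => algebraMap (𝓞 L) L (x i)))
      = -((cntI v (contI x) : ℝ) / (Module.finrank ℚ L : ℝ))
          * Real.log (Ideal.absNorm v.asIdeal) := by
  rw [supAbs_fin hx, nv_mul_log_rpow]

end Aux4

section Aux5

variable {L : Type*} [Field L] [NumberField L]

open NumberField Ideal

lemma finsum_place (f : Place L → ℝ)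
    (hf : (Function.support fun v => f (Sum.inr v)).Finite) :
    ∑ᶠ v : Place L, f v
      = (∑ w : InfinitePlace L, f (Sum.inl w)) + ∑ᶠ v : HeightOneSpectrum (𝓞 L), f (Sum.inr v) := by
  have huniv : (Set.univ : Set (Place L)) = Set.range Sum.inl ∪ Set.range Sum.inr := by
    ext v; cases v <;> simp
  have h1 : (Set.range (Sum.inl : InfinitePlace L → Place L) ∩ Function.support f).Finite :=
    Set.Finite.inter_of_left (Set.finite_range _) _
  have h2 : (Set.range (Sum.inr : HeightOneSpectrum (𝓞 L) → Place L)
      ∩ Function.support f).Finite := by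
    have : (Set.range (Sum.inr : HeightOneSpectrum (𝓞 L) → Place L) ∩ Function.support f)
        ⊆ Sum.inr '' (Function.support fun v => f (Sum.inr v)) := by
      rintro p ⟨⟨v, rfl⟩, hp⟩
      exact ⟨v, hp, rfl⟩
    exact (hf.image _).subset this
  rw [← finsum_mem_univ, huniv,
    finsum_mem_union' (by simp [Set.disjoint_left]) h1 h2,
    finsum_mem_range Sum.inl_injective, finsum_mem_range Sum.inr_injective,
    finsum_eq_sum_of_fintype]

lemma support_fin_term {x : Fin (m + 1) → 𝓞 L} (hx : ∃ i, x i ≠ 0) :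
    (Function.support fun v : HeightOneSpectrum (𝓞 L) =>
      nv L (Sum.inr v) * Real.log (supAbs L (Sum.inr v) (fun i => algebraMap (𝓞 L) L (x i)))).Finite
    := by
  apply (Ideal.finite_factors (contI_ne_zero hx)).subset
  intro v hv
  rw [Function.mem_support, nv_log_supAbs_fin hx] at hv
  have : cntI v (contI x) ≠ 0 := by
    intro h
    rw [h] at hv
    simp at hv
  exact (cntI_ne_zero_iff (contI_ne_zero hx)).mp this

/-- decomposition of the height of an integral point -/
lemma heightProj_eq {x : Fin (m + 1) → 𝓞 L} (hx : ∃ i, x i ≠ 0) :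
    heightProj L (fun i => algebraMap (𝓞 L) L (x i))
      = (∑ w : InfinitePlace L, ((InfinitePlace.mult w : ℝ) / (Module.finrank ℚ L : ℝ))
            * Real.log (supAbs L (Sum.inl w) (fun i => algebraMap (𝓞 L) L (x i))))
        + ∑ᶠ v : HeightOneSpectrum (𝓞 L),
            (-((cntI v (contI x) : ℝ) / (Module.finrank ℚ L : ℝ))
              * Real.log (Ideal.absNorm v.asIdeal)) := by
  rw [heightProj, finsum_place _ (support_fin_term hx)]
  congr 1
  apply finsum_congr
  intro v
  exact nv_log_supAbs_fin hx

end Aux5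

section Aux6

variable {L : Type*} [Field L] [NumberField L]

open NumberField Ideal

lemma absNorm_asIdeal_pos (v : HeightOneSpectrum (𝓞 L)) : 0 < Ideal.absNorm v.asIdeal := by
  rcases resChar_spec (L := L) v with ⟨hp, hN, -⟩
  rw [hN]
  exact pow_pos hp.pos _

lemma one_lt_absNorm_asIdeal (v : HeightOneSpectrum (𝓞 L)) : 1 < Ideal.absNorm v.asIdeal := by
  rcases resChar_spec (L := L) v with ⟨hp, hN, hf⟩
  rw [hN]
  exact Nat.one_lt_pow hf hp.one_lt

lemma log_absNorm_nonneg (v : HeightOneSpectrum (𝓞 L)) :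
    0 ≤ Real.log (Ideal.absNorm v.asIdeal) :=
  Real.log_nonneg (by exact_mod_cast (one_lt_absNorm_asIdeal v).le)

lemma log_absNorm_eq_sum {I : Ideal (𝓞 L)} (hI : I ≠ 0)
    (T : Finset (HeightOneSpectrum (𝓞 L))) (hT : ∀ v, v.asIdeal ∣ I → v ∈ T) :
    Real.log (Ideal.absNorm I)
      = ∑ v ∈ T, (cntI v I : ℝ) * Real.log (Ideal.absNorm v.asIdeal) := by
  have hfact := Ideal.finprod_heightOneSpectrum_factorization hI
  have hsub : (Function.mulSupport fun v : HeightOneSpectrum (𝓞 L) =>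
      v.maxPowDividing I) ⊆ ↑T := by
    intro v hv
    rw [Function.mem_mulSupport, IsDedekindDomain.HeightOneSpectrum.maxPowDividing] at hv
    have hcnt : cntI v I ≠ 0 := by
      intro h
      rw [show ((Associates.mk v.asIdeal).count (Associates.mk I).factors) = cntI v I from rfl,
        h, pow_zero] at hv
      exact hv rfl
    exact hT v ((cntI_ne_zero_iff hI).mp hcnt)
  rw [finprod_eq_finset_prod_of_mulSupport_subset _ hsub] at hfact
  conv_lhs => rw [← hfact, map_prod]
  have hcast : ((∏ v ∈ T, Ideal.absNorm (v.maxPowDividing I) : ℕ) : ℝ)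
      = ∏ v ∈ T, ((Ideal.absNorm (v.maxPowDividing I) : ℝ)) := by push_cast; rfl
  rw [hcast, Real.log_prod]
  · apply Finset.sum_congr rfl
    intro v _
    rw [IsDedekindDomain.HeightOneSpectrum.maxPowDividing, map_pow]
    push_cast
    rw [Real.log_pow]
    rfl
  · intro v _
    have := absNorm_asIdeal_pos (L := L) v
    rw [IsDedekindDomain.HeightOneSpectrum.maxPowDividing, map_pow]
    positivity

lemma log_absNorm_span_eq_arch {D : 𝓞 L} (hD : D ≠ 0) :
    Real.log (Ideal.absNorm (Ideal.span {D}))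
      = ∑ w : InfinitePlace L,
          (InfinitePlace.mult w : ℝ) * Real.log (w (algebraMap (𝓞 L) L D)) := by
  have h1 : ((Ideal.absNorm (Ideal.span {D}) : ℕ) : ℝ)
      = |Algebra.norm ℚ (algebraMap (𝓞 L) L D)| := by
    rw [Ideal.absNorm_span_singleton]
    rw [Nat.cast_natAbs, Int.cast_abs]
    rw [show ((Algebra.norm ℤ D : ℤ) : ℝ) = (((Algebra.norm ℤ D : ℤ) : ℚ) : ℝ) by push_cast; rfl]
    rw [Algebra.coe_norm_int]
    rw [Rat.cast_abs]
  have h2 := InfinitePlace.prod_eq_abs_norm (algebraMap (𝓞 L) L D)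
  rw [h1, ← h2, Real.log_prod]
  · apply Finset.sum_congr rfl
    intro w _
    rw [Real.log_pow]
  · intro w _
    have : 0 < w (algebraMap (𝓞 L) L D) := InfinitePlace.pos_iff.mpr (coeL_ne_zero hD)
    positivity

end Aux6

section Aux7

variable {L : Type*} [Field L] [NumberField L] {m : ℕ}

open NumberField Ideal

lemma le_supArch (w : InfinitePlace L) (x : Fin (m + 1) → 𝓞 L) (i : Fin (m + 1)) :
    w (algebraMap (𝓞 L) L (x i))
      ≤ supAbs L (Sum.inl w) (fun i => algebraMap (𝓞 L) L (x i)) :=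
  Finset.le_sup' (fun j => placeAbs L (Sum.inl w) (algebraMap (𝓞 L) L (x j)))
    (Finset.mem_univ i)

lemma supArch_pos (w : InfinitePlace L) {x : Fin (m + 1) → 𝓞 L} (hx : ∃ i, x i ≠ 0) :
    0 < supAbs L (Sum.inl w) (fun i => algebraMap (𝓞 L) L (x i)) := by
  obtain ⟨i, hi⟩ := hx
  calc (0 : ℝ) < w (algebraMap (𝓞 L) L (x i)) :=
        InfinitePlace.pos_iff.mpr (coeL_ne_zero hi)
    _ ≤ _ := le_supArch w x i

lemma supArch_nonneg (w : InfinitePlace L) (x : Fin (m + 1) → 𝓞 L) (i : Fin (m+1)) :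
    0 ≤ w (algebraMap (𝓞 L) L (x i)) := AbsoluteValue.nonneg _ _

lemma arch_term_bound (w : InfinitePlace L) {x y : Fin (m + 1) → 𝓞 L}
    (hx0 : ∃ i, x i ≠ 0) (hy0 : ∃ i, y i ≠ 0) {i0 j0 : Fin (m + 1)}
    (hD : x i0 * y j0 - x j0 * y i0 ≠ 0) :
    Real.log (w (algebraMap (𝓞 L) L (x i0 * y j0 - x j0 * y i0)))
      ≤ Real.log 2
        + Real.log (supAbs L (Sum.inl w) (fun i => algebraMap (𝓞 L) L (x i)))
        + Real.log (supAbs L (Sum.inl w) (fun i => algebraMap (𝓞 L) L (y i))) := by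
  set sx := supAbs L (Sum.inl w) (fun i => algebraMap (𝓞 L) L (x i)) with hsx
  set sy := supAbs L (Sum.inl w) (fun i => algebraMap (𝓞 L) L (y i)) with hsy
  have hsxpos := supArch_pos w hx0
  have hsypos := supArch_pos w hy0
  have hb : w (algebraMap (𝓞 L) L (x i0 * y j0 - x j0 * y i0)) ≤ 2 * (sx * sy) := by
    rw [map_sub, _root_.map_mul, _root_.map_mul]
    calc w (algebraMap (𝓞 L) L (x i0) * algebraMap (𝓞 L) L (y j0)
            - algebraMap (𝓞 L) L (x j0) * algebraMap (𝓞 L) L (y i0))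
        ≤ w (algebraMap (𝓞 L) L (x i0) * algebraMap (𝓞 L) L (y j0))
          + w (algebraMap (𝓞 L) L (x j0) * algebraMap (𝓞 L) L (y i0)) :=
          w.1.sub_le_add _ _
      _ = w (algebraMap (𝓞 L) L (x i0)) * w (algebraMap (𝓞 L) L (y j0))
          + w (algebraMap (𝓞 L) L (x j0)) * w (algebraMap (𝓞 L) L (y i0)) := by
          rw [_root_.map_mul, _root_.map_mul]
      _ ≤ sx * sy + sx * sy :=
          add_le_add
            (mul_le_mul (le_supArch w x i0) (le_supArch w y j0)
              (supArch_nonneg w y j0) hsxpos.le)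
            (mul_le_mul (le_supArch w x j0) (le_supArch w y i0)
              (supArch_nonneg w y i0) hsxpos.le)
      _ = 2 * (sx * sy) := by ring
  have hwpos : 0 < w (algebraMap (𝓞 L) L (x i0 * y j0 - x j0 * y i0)) :=
    InfinitePlace.pos_iff.mpr (coeL_ne_zero hD)
  calc Real.log (w (algebraMap (𝓞 L) L (x i0 * y j0 - x j0 * y i0)))
      ≤ Real.log (2 * (sx * sy)) := Real.log_le_log hwpos hb
    _ = Real.log 2 + sx.log + sy.log := by
        rw [Real.log_mul (by norm_num) (by positivity), Real.log_mul hsxpos.ne' hsypos.ne']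
        ring

end Aux7

open Ideal in
/-- Proposition 3.3(b) of Baker–Silverman: Let `L` be a number field and let
`x ≠ y` be distinct points of `ℙⁿ(L)` with coordinates in `𝒪_L`.  Let `𝔓_1, …, 𝔓_r` be
distinct nonzero primes of `𝒪_L` such that, for each `k`, neither `x` nor `y` reduces to the
zero vector mod `𝔓_k` and `x ≡ y (mod 𝔓_k)` (all cross terms `x_i y_j - x_j y_i` lie in
`𝔓_k`).  Then `h(x) + h(y) ≥ (1/[L:ℚ]) ∑_k log N_{L/ℚ}(𝔓_k) - log 2`. -/
theorem height_add_height_ge_sum_log_norm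
    {L : Type*} [Field L] [NumberField L] {n r : ℕ}
    (x y : Fin (n + 1) → 𝓞 L)
    (hxy : ∃ i j, x i * y j ≠ x j * y i)
    (P : Fin r → HeightOneSpectrum (𝓞 L)) (hP : Function.Injective P)
    (hx : ∀ k, ∃ i, x i ∉ (P k).asIdeal)
    (hy : ∀ k, ∃ j, y j ∉ (P k).asIdeal)
    (hcong : ∀ k, ∀ i j, x i * y j - x j * y i ∈ (P k).asIdeal) :
    NumberField.heightProj L (fun i => algebraMap (𝓞 L) L (x i)) +
        NumberField.heightProj L (fun i => algebraMap (𝓞 L) L (y i)) ≥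
      (1 / (Module.finrank ℚ L : ℝ)) *
          (∑ k, Real.log (Ideal.absNorm (P k).asIdeal)) -
        Real.log 2 := by
  obtain ⟨i0, j0, hij⟩ := hxy
  set D : 𝓞 L := x i0 * y j0 - x j0 * y i0 with hDdef
  have hD : D ≠ 0 := sub_ne_zero.mpr hij
  have hx0 : ∃ i, x i ≠ 0 := by
    by_contra h
    push_neg at h
    apply hD
    rw [hDdef, h i0, h j0]
    ring
  have hy0 : ∃ i, y i ≠ 0 := by
    by_contra h
    push_neg at h
    apply hD
    rw [hDdef, h i0, h j0]
    ring
  have hDspan : Ideal.span {D} ≠ 0 := by simpa using hD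
  set d : ℝ := (Module.finrank ℚ L : ℝ) with hddef
  have hd : 0 < d := by
    rw [hddef]; exact_mod_cast Module.finrank_pos
  -- the finsets
  set Sx := (Ideal.finite_factors (contI_ne_zero hx0)).toFinset with hSx
  set Sy := (Ideal.finite_factors (contI_ne_zero hy0)).toFinset with hSy
  set SD := (Ideal.finite_factors hDspan).toFinset with hSD
  set SP := Finset.image P Finset.univ with hSP
  set T := Sx ∪ Sy ∪ SD ∪ SP with hT
  have hSxT : Sx ⊆ T := by intro v hv; simp [hT, hv]
  have hSyT : Sy ⊆ T := by intro v hv; simp [hT, hv]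
  have hSDT : SD ⊆ T := by intro v hv; simp [hT, hv]
  have hSPT : SP ⊆ T := by intro v hv; simp [hT, hv]
  -- abbreviations
  set sx : InfinitePlace L → ℝ :=
    fun w => NumberField.supAbs L (Sum.inl w) (fun i => algebraMap (𝓞 L) L (x i)) with hsx
  set sy : InfinitePlace L → ℝ :=
    fun w => NumberField.supAbs L (Sum.inl w) (fun i => algebraMap (𝓞 L) L (y i)) with hsy
  set lN : HeightOneSpectrum (𝓞 L) → ℝ :=
    fun v => Real.log (Ideal.absNorm v.asIdeal) with hlN
  have hlN0 : ∀ v, 0 ≤ lN v := fun v => log_absNorm_nonneg v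
  set Bx := ∑ w : InfinitePlace L, (InfinitePlace.mult w : ℝ) * Real.log (sx w) with hBx
  set By := ∑ w : InfinitePlace L, (InfinitePlace.mult w : ℝ) * Real.log (sy w) with hBy
  set Cx := ∑ v ∈ T, (cntI v (contI x) : ℝ) * lN v with hCx
  set Cy := ∑ v ∈ T, (cntI v (contI y) : ℝ) * lN v with hCy
  set CD := ∑ v ∈ T, (cntI v (Ideal.span {D}) : ℝ) * lN v with hCD
  -- height decomposition
  have hHx : NumberField.heightProj L (fun i => algebraMap (𝓞 L) L (x i))
      = Bx / d - Cx / d := by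
    rw [heightProj_eq hx0]
    congr 1
    · rw [hBx, Finset.sum_div]
      apply Finset.sum_congr rfl
      intro w _
      rw [mul_div_assoc, div_mul_eq_mul_div, mul_div_assoc]
    · rw [show (∑ᶠ v : HeightOneSpectrum (𝓞 L),
          (-((cntI v (contI x) : ℝ) / d) * Real.log (Ideal.absNorm v.asIdeal)))
          = ∑ v ∈ T, (-((cntI v (contI x) : ℝ) / d) * lN v) from
        finsum_eq_finset_sum_of_support_subset _ ?_]
      · rw [hCx, Finset.sum_div, ← Finset.sum_neg_distrib]
        apply Finset.sum_congr rfl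
        intro v _
        field_simp
      · intro v hv
        have hcnt : cntI v (contI x) ≠ 0 := by
          intro h
          apply hv
          simp [h]
        apply hSxT
        rw [hSx]
        simp only [Set.Finite.mem_toFinset, Set.mem_setOf_eq]
        exact (cntI_ne_zero_iff (contI_ne_zero hx0)).mp hcnt
  have hHy : NumberField.heightProj L (fun i => algebraMap (𝓞 L) L (y i))
      = By / d - Cy / d := by
    rw [heightProj_eq hy0]
    congr 1
    · rw [hBy, Finset.sum_div]
      apply Finset.sum_congr rfl
      intro w _
      rw [mul_div_assoc, div_mul_eq_mul_div, mul_div_assoc]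
    · rw [show (∑ᶠ v : HeightOneSpectrum (𝓞 L),
          (-((cntI v (contI y) : ℝ) / d) * Real.log (Ideal.absNorm v.asIdeal)))
          = ∑ v ∈ T, (-((cntI v (contI y) : ℝ) / d) * lN v) from
        finsum_eq_finset_sum_of_support_subset _ ?_]
      · rw [hCy, Finset.sum_div, ← Finset.sum_neg_distrib]
        apply Finset.sum_congr rfl
        intro v _
        field_simp
      · intro v hv
        have hcnt : cntI v (contI y) ≠ 0 := by
          intro h
          apply hv
          simp [h]
        apply hSyT
        rw [hSy]
        simp only [Set.Finite.mem_toFinset, Set.mem_setOf_eq]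
        exact (cntI_ne_zero_iff (contI_ne_zero hy0)).mp hcnt
  -- pointwise inequality at finite places
  have hpoint : ∀ v ∈ T,
      (cntI v (contI x) : ℝ) * lN v + (cntI v (contI y) : ℝ) * lN v
          + (if v ∈ SP then lN v else 0)
        ≤ (cntI v (Ideal.span {D}) : ℝ) * lN v := by
    intro v _
    have hnat : cntI v (contI x) + cntI v (contI y) + (if v ∈ SP then 1 else 0)
        ≤ cntI v (Ideal.span {D}) := by
      rw [← mem_pow_iff_le_cnt hD]
      by_cases hvP : v ∈ SP
      · simp only [if_pos hvP]
        obtain ⟨k, -, rfl⟩ := Finset.mem_image.mp hvP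
        have hcx : cntI (P k) (contI x) = 0 := by
          obtain ⟨i, hi⟩ := hx k
          have hxi : x i ≠ 0 := by
            intro h
            exact hi (h ▸ zero_mem _)
          have h1 : cntI (P k) (Ideal.span {x i}) = 0 := by
            by_contra h
            apply hi
            rw [← pow_one (P k).asIdeal, mem_pow_iff_le_cnt hxi]
            omega
          have := cnt_contI_le (v := P k) hx0 hxi
          omega
        have hcy : cntI (P k) (contI y) = 0 := by
          obtain ⟨i, hi⟩ := hy k
          have hyi : y i ≠ 0 := by
            intro h
            exact hi (h ▸ zero_mem _)
          have h1 : cntI (P k) (Ideal.span {y i}) = 0 := by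
            by_contra h
            apply hi
            rw [← pow_one (P k).asIdeal, mem_pow_iff_le_cnt hyi]
            omega
          have := cnt_contI_le (v := P k) hy0 hyi
          omega
        rw [hcx, hcy]
        simpa using hcong k i0 j0
      · simp only [if_neg hvP, add_zero]
        have hmem : ∀ (z w : Fin (n + 1) → 𝓞 L) (a b : Fin (n + 1)),
            z a * w b ∈ v.asIdeal ^ (cntI v (contI z) + cntI v (contI w)) := by
          intro z w a b
          rw [pow_add]
          exact Ideal.mul_mem_mul (mem_pow_contI z a) (mem_pow_contI w b)
        exact sub_mem (hmem x y i0 j0) (hmem x y j0 i0)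
    have hcast : (cntI v (contI x) : ℝ) + (cntI v (contI y) : ℝ)
        + (if v ∈ SP then (1 : ℝ) else 0) ≤ (cntI v (Ideal.span {D}) : ℝ) := by
      split_ifs with h <;> [skip; skip] <;>
        · have := hnat
          simp only [if_pos, if_neg, h] at this ⊢ <;> exact_mod_cast this
    have := mul_le_mul_of_nonneg_right hcast (hlN0 v)
    calc (cntI v (contI x) : ℝ) * lN v + (cntI v (contI y) : ℝ) * lN v
          + (if v ∈ SP then lN v else 0)
        = ((cntI v (contI x) : ℝ) + (cntI v (contI y) : ℝ)
            + (if v ∈ SP then (1:ℝ) else 0)) * lN v := by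
          split_ifs <;> ring
      _ ≤ (cntI v (Ideal.span {D}) : ℝ) * lN v := this
  -- sum the pointwise inequality
  have hsumT : Cx + Cy + (∑ k, lN (P k)) ≤ CD := by
    have hstep : ∑ v ∈ T, ((cntI v (contI x) : ℝ) * lN v + (cntI v (contI y) : ℝ) * lN v
        + (if v ∈ SP then lN v else 0)) ≤ CD := by
      rw [hCD]
      exact Finset.sum_le_sum hpoint
    rw [Finset.sum_add_distrib, Finset.sum_add_distrib] at hstep
    have hind : ∑ v ∈ T, (if v ∈ SP then lN v else 0) = ∑ k, lN (P k) := by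
      rw [Finset.sum_ite_mem, Finset.inter_eq_right.mpr hSPT, hSP,
        Finset.sum_image (fun a _ b _ h => hP h)]
    rw [hind] at hstep
    exact hstep
  -- product formula side
  have hCD_eq : CD = Real.log (Ideal.absNorm (Ideal.span {D})) := by
    rw [hCD, log_absNorm_eq_sum hDspan T]
    intro v hv
    exact hSDT (by rw [hSD]; simpa using hv)
  have harch : Real.log (Ideal.absNorm (Ideal.span {D}))
      ≤ d * Real.log 2 + Bx + By := by
    rw [log_absNorm_span_eq_arch hD]
    calc ∑ w : InfinitePlace L,
          (InfinitePlace.mult w : ℝ) * Real.log (w (algebraMap (𝓞 L) L D))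
        ≤ ∑ w : InfinitePlace L,
            (InfinitePlace.mult w : ℝ) * (Real.log 2 + Real.log (sx w) + Real.log (sy w)) := by
          apply Finset.sum_le_sum
          intro w _
          exact mul_le_mul_of_nonneg_left (arch_term_bound w hx0 hy0 hD)
            (by positivity)
      _ = d * Real.log 2 + Bx + By := by
          simp only [mul_add]
          rw [Finset.sum_add_distrib, Finset.sum_add_distrib, ← Finset.sum_mul]
          rw [hBx, hBy]
          have : (∑ w : InfinitePlace L, (InfinitePlace.mult w : ℝ)) = d := by
            rw [hddef]
            exact_mod_cast NumberField.InfinitePlace.sum_mult_eq (K := L)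
          rw [this]
  -- assemble
  rw [ge_iff_le, hHx, hHy]
  have hkey : (∑ k, lN (P k)) ≤ d * Real.log 2 + Bx + By - Cx - Cy := by
    have := hCD_eq ▸ harch
    linarith
  have hgoal : (1 / d) * (∑ k, lN (P k)) - Real.log 2
      ≤ Bx / d - Cx / d + (By / d - Cy / d) := by
    rw [one_div, inv_mul_eq_div, sub_le_iff_le_add, div_le_iff₀ hd]
    have hrw : (Bx / d - Cx / d + (By / d - Cy / d) + Real.log 2) * d
        = Bx + By - Cx - Cy + Real.log 2 * d := by
      field_simp
      ring
    rw [hrw]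
    linarith
  exact hgoal
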